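/- Monotonicity of minimizers of parameterized submodular problems: let F be submodular and ψ'_1,...,ψ'_p : ℝ → ℝ strictly increasing functions. For α ∈ ℝ let A^α be any minimizer of A ↦ F(A) + ∑_{j∈A} ψ'_j(α). Then α > β implies A^α ⊆ A^β. -/

import Mathlib

def Submodular {p : ℕ} (F : Finset (Fin p) → ℝ) : Prop :=
  ∀ A B : Finset (Fin p), F (A ∪ B) + F (A ∩ B) ≤ F A + F B

/-- Monotonicity of minimizers: if each `ψ j` is strictly increasing and `Aα`, `Aβ`
are minimizers of `A ↦ F(A) + ∑_{j ∈ A} ψ j α` (resp. with `β`), then `α > β`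
implies `Aα ⊆ Aβ`. -/
theorem minimizers_monotone {p : ℕ} (F : Finset (Fin p) → ℝ)
    (hF : Submodular F) (h0 : F ∅ = 0)
    (ψ : Fin p → ℝ → ℝ) (hψ : ∀ j, StrictMono (ψ j))
    (α β : ℝ) (hαβ : β < α)
    (Aα Aβ : Finset (Fin p))
    (hAα : ∀ B : Finset (Fin p),
      F Aα + ∑ j ∈ Aα, ψ j α ≤ F B + ∑ j ∈ B, ψ j α)
    (hAβ : ∀ B : Finset (Fin p),
      F Aβ + ∑ j ∈ Aβ, ψ j β ≤ F B + ∑ j ∈ B, ψ j β) :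
    Aα ⊆ Aβ := by
  rw [← Finset.sdiff_eq_empty_iff_subset]
  by_contra hne
  obtain ⟨j, hj⟩ := Finset.nonempty_iff_ne_empty.mpr hne
  have h1 := hAα (Aα ∩ Aβ)
  have h2 := hAβ (Aα ∪ Aβ)
  have hsub := hF Aα Aβ
  have hsplitα : ∑ i ∈ Aα ∩ Aβ, ψ i α + ∑ i ∈ Aα \ Aβ, ψ i α = ∑ i ∈ Aα, ψ i α :=
    Finset.sum_inter_add_sum_sdiff Aα Aβ (fun i => ψ i α)
  have hsplitβ : ∑ i ∈ Aα ∪ Aβ, ψ i β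
      = ∑ i ∈ Aβ, ψ i β + ∑ i ∈ Aα \ Aβ, ψ i β := by
    rw [Finset.union_comm, ← Finset.sum_union Finset.sdiff_disjoint.symm,
      Finset.union_sdiff_self_eq_union]
  have key : ∑ i ∈ Aα \ Aβ, ψ i α ≤ ∑ i ∈ Aα \ Aβ, ψ i β := by linarith
  have hstrict : ∑ i ∈ Aα \ Aβ, ψ i β < ∑ i ∈ Aα \ Aβ, ψ i α :=
    Finset.sum_lt_sum_of_nonempty ⟨j, hj⟩ (fun i _ => (hψ i) hαβ)
  linarith
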